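/- Let R > 0 and E ∈ 𝒰_R ⊆ ℝ², and assume 0 ∈ ∂E with B((0,−R), R) ⊆ E and B((0,R), R) ∩ E = ∅. Set C := (−√3·R/2, √3·R/2) × (−R, R). Then there is a function f : (−√3·R/2, √3·R/2) → ℝ such that ∂E ∩ C = {(x, f(x)) : |x| < √3·R/2} and E ∩ C = {(x, z) ∈ C : z ≤ f(x)}; moreover f is differentiable, f(0) = 0, |f(x)| ≤ R − √(R² − x²) and |f′(x)| ≤ |x|/√(R² − x²) for every x, and f′ is Lipschitz with a Lipschitz constant depending only on R (not on E or on the point). -/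

import Mathlib

open Set Metric MeasureTheory Filter Topology ENNReal NNReal

noncomputable section

abbrev En (n : ℕ) := EuclideanSpace ℝ (Fin n)

def sphereCond (n : ℕ) (R : ℝ) (E : Set (En n)) : Prop :=
  ∀ p ∈ frontier E, ∃ p' p'' : En n, dist p p' = R ∧ dist p p'' = R ∧
    ball p' R ⊆ E ∧ ball p'' R ∩ E = ∅

def UR (n : ℕ) (R : ℝ) : Set (Set (En n)) :=
  {E | IsClosed E ∧ Bornology.IsBounded E ∧ sphereCond n R E}

def mk2 (x z : ℝ) : En 2 := (WithLp.equiv 2 (Fin 2 → ℝ)).symm ![x, z]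

open RealInnerProductSpace

namespace LG

lemma mk2_zero (x z : ℝ) : mk2 x z 0 = x := rfl
lemma mk2_one (x z : ℝ) : mk2 x z 1 = z := rfl
lemma mk2_eta (p : En 2) : mk2 (p 0) (p 1) = p := by
  ext i; fin_cases i <;> rfl

lemma dist_eq2 (p q : En 2) : dist p q = Real.sqrt ((p 0 - q 0)^2 + (p 1 - q 1)^2) := by
  rw [EuclideanSpace.dist_eq]
  simp [Fin.sum_univ_two, Real.dist_eq, sq_abs]

lemma mem_ball_iff2 {p c : En 2} {r : ℝ} (hr : 0 < r) :
    p ∈ ball c r ↔ (p 0 - c 0)^2 + (p 1 - c 1)^2 < r^2 := by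
  rw [mem_ball, dist_eq2, Real.sqrt_lt' hr]

lemma not_mem_ball_iff2 {p c : En 2} {r : ℝ} (hr : 0 < r) :
    p ∉ ball c r ↔ r^2 ≤ (p 0 - c 0)^2 + (p 1 - c 1)^2 := by
  rw [mem_ball_iff2 hr]; push_neg; rfl

lemma dist_sq_ge {p q : En 2} {r : ℝ} (hr : 0 ≤ r) (h : r ≤ dist p q) :
    r^2 ≤ (p 0 - q 0)^2 + (p 1 - q 1)^2 := by
  rw [dist_eq2] at h
  have h0 : 0 ≤ (p 0 - q 0)^2 + (p 1 - q 1)^2 := by positivity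
  nlinarith [Real.sq_sqrt h0]

lemma antipodal {R : ℝ} (hR : 0 < R) {p p' p'' : En 2}
    (h1 : dist p p' = R) (h2 : dist p p'' = R) (h3 : 2 * R ≤ dist p' p'') :
    p - p' = p'' - p := by
  have hd : dist p' p'' = 2 * R := by
    refine le_antisymm ?_ h3
    calc dist p' p'' ≤ dist p' p + dist p p'' := dist_triangle _ _ _
    _ = 2 * R := by rw [dist_comm p' p, h1, h2]; ring
  set u := p - p' with hu
  set v := p'' - p with hv
  have hnu : ‖u‖ = R := by rw [hu, ← dist_eq_norm]; exact h1
  have hnv : ‖v‖ = R := by rw [hv, ← dist_eq_norm, dist_comm]; exact h2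
  have hsum : ‖u + v‖ = 2 * R := by
    have h : u + v = p'' - p' := by rw [hu, hv]; abel
    rw [h, ← dist_eq_norm, dist_comm]; exact hd
  have hip : ⟪u, v⟫ = ‖u‖ * ‖v‖ := by
    have h := norm_add_sq_real u v; rw [hsum] at h
    rw [hnu, hnv] at h ⊢
    nlinarith [h]
  have heq := (inner_eq_norm_mul_iff_real).1 hip
  rw [hnu, hnv] at heq
  exact smul_right_injective (En 2) (ne_of_gt hR) heq

lemma disjoint_balls_dist {E : Set (En 2)} {c1 c2 : En 2} {R : ℝ} (hR : 0 < R)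
    (h1 : ball c1 R ⊆ E) (h2 : ball c2 R ∩ E = ∅) : 2 * R ≤ dist c1 c2 := by
  by_contra h
  push_neg at h
  set m := midpoint ℝ c1 c2
  have hm1 : m ∈ ball c1 R := by
    rw [mem_ball, dist_comm, dist_left_midpoint]
    simp only [Real.norm_ofNat]
    linarith
  have hm2 : m ∈ ball c2 R := by
    rw [mem_ball, dist_comm, dist_right_midpoint]
    simp only [Real.norm_ofNat]
    linarith
  have : m ∈ ball c2 R ∩ E := ⟨hm2, h1 hm1⟩
  rw [h2] at this
  exact this

/-- squared-norm bound for strip points -/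
lemma strip_sq {R x : ℝ} (hR : 0 < R)
    (hx : x ∈ Ioo (-(Real.sqrt 3 * R / 2)) (Real.sqrt 3 * R / 2)) : x^2 < 3*R^2/4 := by
  have h3 : (Real.sqrt 3)^2 = 3 := Real.sq_sqrt (by norm_num)
  obtain ⟨h1, h2⟩ := hx
  nlinarith [Real.sqrt_nonneg 3]

lemma q_pos {R x : ℝ} (hR : 0 < R) (hx2 : x^2 < 3*R^2/4) :
    R/2 < Real.sqrt (R^2 - x^2) := by
  have : (R/2)^2 < R^2 - x^2 := by nlinarith
  exact Real.lt_sqrt (by positivity) |>.2 this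

lemma q_le {R x : ℝ} (hR : 0 < R) : Real.sqrt (R^2 - x^2) ≤ R := by
  calc Real.sqrt (R^2 - x^2) ≤ Real.sqrt (R^2) := Real.sqrt_le_sqrt (by nlinarith [sq_nonneg x])
  _ = R := Real.sqrt_sq hR.le

lemma q_sq {R x : ℝ} (hx2 : x^2 ≤ R^2) : (Real.sqrt (R^2 - x^2))^2 = R^2 - x^2 :=
  Real.sq_sqrt (by linarith)


section Main
variable {R : ℝ} {E : Set (En 2)}

/-- Any frontier point in the horizontal slab has |z| ≤ R - sqrt(R^2-x^2). -/
lemma frontier_z_bound (hR : 0 < R) (hEc : IsClosed E)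
    (hlow : ball (mk2 0 (-R)) R ⊆ E) (hhigh : ball (mk2 0 R) R ∩ E = ∅)
    {x z : ℝ} (hz : z ∈ Ioo (-R) R) (hfr : mk2 x z ∈ frontier E) :
    |z| ≤ R - Real.sqrt (R^2 - x^2) := by
  have hpE : mk2 x z ∈ E := hEc.frontier_subset hfr
  have hnotint : mk2 x z ∉ interior E := fun h =>
    (disjoint_interior_frontier (s := E)).ne_of_mem h hfr rfl
  have hNotHigh : mk2 x z ∉ ball (mk2 0 R) R := fun h => by
    have : mk2 x z ∈ ball (mk2 0 R) R ∩ E := ⟨h, hpE⟩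
    rw [hhigh] at this; exact this
  have hNotLow : mk2 x z ∉ ball (mk2 0 (-R)) R := fun h =>
    hnotint (interior_maximal hlow isOpen_ball h)
  rw [not_mem_ball_iff2 hR] at hNotHigh hNotLow
  simp only [mk2_zero, mk2_one] at hNotHigh hNotLow
  have h1 : R^2 - x^2 ≤ (z - R)^2 := by nlinarith [hNotHigh]
  have h2 : R^2 - x^2 ≤ (z + R)^2 := by nlinarith [hNotLow]
  have hs1 : Real.sqrt (R^2 - x^2) ≤ R - z := by
    calc Real.sqrt (R^2 - x^2) ≤ Real.sqrt ((z - R)^2) := Real.sqrt_le_sqrt h1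
    _ = |z - R| := Real.sqrt_sq_eq_abs _
    _ = R - z := by rw [abs_of_nonpos (by linarith [hz.2])]; ring
  have hs2 : Real.sqrt (R^2 - x^2) ≤ z + R := by
    calc Real.sqrt (R^2 - x^2) ≤ Real.sqrt ((z + R)^2) := Real.sqrt_le_sqrt h2
    _ = |z + R| := Real.sqrt_sq_eq_abs _
    _ = z + R := abs_of_nonneg (by linarith [hz.1])
  rw [abs_le]; constructor <;> linarith

set_option maxHeartbeats 1000000 in
/-- Normal structure at a frontier point in the strip. -/
lemma normal_structure (hR : 0 < R) (hEc : IsClosed E) (hsph : sphereCond 2 R E)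
    (hlow : ball (mk2 0 (-R)) R ⊆ E) (hhigh : ball (mk2 0 R) R ∩ E = ∅)
    {x z : ℝ} (hx : x ∈ Ioo (-(Real.sqrt 3 * R / 2)) (Real.sqrt 3 * R / 2))
    (hz : z ∈ Ioo (-R) R) (hfr : mk2 x z ∈ frontier E) :
    ∃ α β : ℝ, α^2 + β^2 = R^2 ∧ Real.sqrt (R^2 - x^2) ≤ β ∧ α^2 ≤ x^2 ∧
      ball (mk2 (x+α) (z+β)) R ∩ E = ∅ ∧ ball (mk2 (x-α) (z-β)) R ⊆ E := by
  obtain ⟨p', p'', hd1, hd2, hint, hext⟩ := hsph _ hfr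
  set q := Real.sqrt (R^2 - x^2) with hqdef
  have hx2 : x^2 < 3*R^2/4 := strip_sq hR hx
  have hq2 : q^2 = R^2 - x^2 := q_sq (by nlinarith)
  have hq0 : (0:ℝ) ≤ q := Real.sqrt_nonneg _
  have hqR2 : R/2 < q := q_pos hR hx2
  have hqle : q ≤ R := q_le hR
  have hzb : |z| ≤ R - q := frontier_z_bound hR hEc hlow hhigh hz hfr
  have hsep : 2 * R ≤ dist p' p'' := disjoint_balls_dist hR hint hext
  have hanti := antipodal hR hd1 hd2 hsep
  set α := p'' 0 - x with hα
  set β := p'' 1 - z with hβ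
  have hc0 : (mk2 x z - p') 0 = (p'' - mk2 x z) 0 := by rw [hanti]
  have hc1 : (mk2 x z - p') 1 = (p'' - mk2 x z) 1 := by rw [hanti]
  simp only [PiLp.sub_apply, mk2_zero, mk2_one] at hc0 hc1
  have e0 : p'' 0 = x + α := by rw [hα]; ring
  have e1 : p'' 1 = z + β := by rw [hβ]; ring
  have hp''eq : p'' = mk2 (x + α) (z + β) := by rw [← e0, ← e1, mk2_eta]
  have e0' : p' 0 = x - α := by rw [hα]; linarith [hc0]
  have e1' : p' 1 = z - β := by rw [hβ]; linarith [hc1]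
  have hp'eq : p' = mk2 (x - α) (z - β) := by rw [← e0', ← e1', mk2_eta]
  have hαβ : α^2 + β^2 = R^2 := by
    have h := hd2
    rw [dist_eq2] at h
    have h0 : 0 ≤ (mk2 x z 0 - p'' 0)^2 + (mk2 x z 1 - p'' 1)^2 := by positivity
    have h3 := Real.sq_sqrt h0
    rw [h] at h3
    simp only [mk2_zero, mk2_one, e0, e1] at h3
    linear_combination - h3
  have hA : 2 * R ≤ dist p'' (mk2 0 (-R)) := by
    rw [dist_comm]
    exact disjoint_balls_dist hR hlow hext
  have hB : 2 * R ≤ dist p' (mk2 0 R) :=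
    disjoint_balls_dist hR hint hhigh
  have hA2 := dist_sq_ge (by linarith) hA
  have hB2 := dist_sq_ge (by linarith) hB
  rw [hp''eq] at hA2
  rw [hp'eq] at hB2
  simp only [mk2_zero, mk2_one] at hA2 hB2
  have hz2 : z^2 ≤ (R - q)^2 := by
    nlinarith [sq_abs z, mul_self_le_mul_self (abs_nonneg z) hzb]
  have hsum : 4*R^2 - 2*x^2 - 2*z^2 ≤ 4*R*β := by
    have hadd := add_le_add hA2 hB2
    have hαβ2 := hαβ
    ring_nf at hadd hαβ2 ⊢
    linarith [hadd, hαβ2]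
  have hβq : q ≤ β := by nlinarith [hsum, hz2, hq2, hR]
  have hα2 : α^2 ≤ x^2 := by nlinarith [hβq, hq2, hαβ, hq0]
  refine ⟨α, β, hαβ, hβq, hα2, ?_, ?_⟩
  · rw [← hp''eq]; exact hext
  · rw [← hp'eq]; exact hint

/-- Uniqueness of the frontier height over each vertical line of the strip. -/
lemma unique_z (hR : 0 < R) (hEc : IsClosed E) (hsph : sphereCond 2 R E)
    (hlow : ball (mk2 0 (-R)) R ⊆ E) (hhigh : ball (mk2 0 R) R ∩ E = ∅)
    {x z z' : ℝ} (hx : x ∈ Ioo (-(Real.sqrt 3 * R / 2)) (Real.sqrt 3 * R / 2))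
    (hz : z ∈ Ioo (-R) R) (hz' : z' ∈ Ioo (-R) R)
    (h1 : mk2 x z ∈ frontier E) (h2 : mk2 x z' ∈ frontier E) : z = z' := by
  set q := Real.sqrt (R^2 - x^2) with hqdef
  have hx2 : x^2 < 3*R^2/4 := strip_sq hR hx
  have hqR2 : R/2 < q := q_pos hR hx2
  have key : ∀ w w' : ℝ, w ∈ Ioo (-R) R → w' ∈ Ioo (-R) R →
      mk2 x w ∈ frontier E → mk2 x w' ∈ frontier E → w < w' → False := by
    intro w w' hw hw' hf hf' hlt
    obtain ⟨α, β, hαβ, hβq, hα2, hext, _⟩ :=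
      normal_structure hR hEc hsph hlow hhigh hx hw hf
    have hwb : |w| ≤ R - q := frontier_z_bound hR hEc hlow hhigh hw hf
    have hw'b : |w'| ≤ R - q := frontier_z_bound hR hEc hlow hhigh hw' hf'
    have hmem : mk2 x w' ∈ ball (mk2 (x+α) (w+β)) R := by
      rw [mem_ball_iff2 hR]
      simp only [mk2_zero, mk2_one]
      have hub : w' - w < 2 * β := by
        rw [abs_le] at hwb hw'b
        have h1 : w' - w ≤ 2 * (R - q) := by linarith [hwb.1, hw'b.2]
        linarith
      nlinarith [hlt, hub, hαβ]
    have hbad : mk2 x w' ∈ ball (mk2 (x+α) (w+β)) R ∩ E :=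
      ⟨hmem, hEc.frontier_subset hf'⟩
    rw [hext] at hbad
    exact hbad
  rcases lt_trichotomy z z' with h | h | h
  · exact (key z z' hz hz' h1 h2 h).elim
  · exact h
  · exact (key z' z hz' hz h2 h1 h).elim

end Main

lemma dist_mk2_vert (x z₁ z₂ : ℝ) : dist (mk2 x z₁) (mk2 x z₂) = |z₁ - z₂| := by
  rw [dist_eq2]
  simp only [mk2_zero, mk2_one]
  rw [show (x - x)^2 + (z₁ - z₂)^2 = (z₁ - z₂)^2 by ring, Real.sqrt_sq_eq_abs]

lemma cont_mk2 (x : ℝ) : Continuous fun z => mk2 x z := by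
  refine (LipschitzWith.of_dist_le_mul (K := 1) fun z z' => ?_).continuous
  rw [dist_mk2_vert, Real.dist_eq]
  simp

/-- The graph function. -/
def fE (R : ℝ) (E : Set (En 2)) (x : ℝ) : ℝ := sSup {z | z ∈ Icc (-R) R ∧ mk2 x z ∈ E}

section Main2
variable {R : ℝ} {E : Set (En 2)}

lemma q_lip (hR : 0 < R) {x y : ℝ}
    (hx : x ∈ Ioo (-(Real.sqrt 3 * R / 2)) (Real.sqrt 3 * R / 2))
    (hy : y ∈ Ioo (-(Real.sqrt 3 * R / 2)) (Real.sqrt 3 * R / 2)) :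
    |Real.sqrt (R^2 - y^2) - Real.sqrt (R^2 - x^2)| ≤ Real.sqrt 3 * |y - x| := by
  set qx := Real.sqrt (R^2 - x^2)
  set qy := Real.sqrt (R^2 - y^2)
  have hx2 : x^2 < 3*R^2/4 := strip_sq hR hx
  have hy2 : y^2 < 3*R^2/4 := strip_sq hR hy
  have hqx : R/2 < qx := q_pos hR hx2
  have hqy : R/2 < qy := q_pos hR hy2
  have hqx2 : qx^2 = R^2 - x^2 := q_sq (by nlinarith)
  have hqy2 : qy^2 = R^2 - y^2 := q_sq (by nlinarith)
  have h3 : (Real.sqrt 3)^2 = 3 := Real.sq_sqrt (by norm_num)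
  have h30 : 0 ≤ Real.sqrt 3 := Real.sqrt_nonneg 3
  have habs : |x + y| ≤ Real.sqrt 3 * R := by
    rw [abs_le]
    obtain ⟨ha1, ha2⟩ := hx
    obtain ⟨hb1, hb2⟩ := hy
    constructor <;> nlinarith
  have hkey : (qy - qx) * (qy + qx) = x^2 - y^2 := by nlinarith [hqx2, hqy2]
  rw [abs_le]
  have hRq : R < qy + qx := by linarith
  have hquot : |x^2 - y^2| ≤ Real.sqrt 3 * R * |y - x| := by
    rw [show x^2 - y^2 = -((x+y)*(y-x)) by ring, abs_neg, abs_mul]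
    exact mul_le_mul_of_nonneg_right habs (abs_nonneg _)
  rw [abs_le] at hquot
  have h1 : (qy - qx) * (qy + qx) ≤ Real.sqrt 3 * R * |y - x| := by
    rw [hkey]; exact hquot.2
  have hkey2 : (qx - qy) * (qy + qx) = y^2 - x^2 := by linear_combination -hkey
  have h2 : (qx - qy) * (qy + qx) ≤ Real.sqrt 3 * R * |y - x| := by
    rw [hkey2]; linarith [hquot.1]
  have habsu : 0 ≤ Real.sqrt 3 * |y - x| := mul_nonneg h30 (abs_nonneg _)
  constructor
  · rcases le_or_gt qx qy with hc | hc
    · linarith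
    · have hpos : 0 ≤ qx - qy := by linarith
      have hm := mul_le_mul_of_nonneg_left hRq.le hpos
      nlinarith [h2, hm, hR]
  · rcases le_or_gt qy qx with hc | hc
    · linarith
    · have hpos : 0 ≤ qy - qx := by linarith
      have hm := mul_le_mul_of_nonneg_left hRq.le hpos
      nlinarith [h1, hm, hR]

lemma f_spec (hR : 0 < R) (hEc : IsClosed E)
    (hlow : ball (mk2 0 (-R)) R ⊆ E) (hhigh : ball (mk2 0 R) R ∩ E = ∅)
    {x : ℝ} (hx : x ∈ Ioo (-(Real.sqrt 3 * R / 2)) (Real.sqrt 3 * R / 2)) :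
    mk2 x (fE R E x) ∈ frontier E ∧ fE R E x ∈ Ioo (-R) R := by
  set q := Real.sqrt (R^2 - x^2) with hqdef
  have hx2 : x^2 < 3*R^2/4 := strip_sq hR hx
  have hq2 : q^2 = R^2 - x^2 := q_sq (by nlinarith)
  have hqR2 : R/2 < q := q_pos hR hx2
  have hqle : q ≤ R := q_le hR
  set T := {z | z ∈ Icc (-R) R ∧ mk2 x z ∈ E} with hT
  have hw0 : -R + q/2 ∈ T := by
    refine ⟨⟨by linarith, by linarith⟩, hlow ?_⟩
    rw [mem_ball_iff2 hR]
    simp only [mk2_zero, mk2_one]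
    nlinarith
  have hTne : T.Nonempty := ⟨_, hw0⟩
  have hTc : IsClosed T := by
    show IsClosed (Icc (-R) R ∩ (fun z => mk2 x z) ⁻¹' E)
    exact IsClosed.inter isClosed_Icc (hEc.preimage (cont_mk2 x))
  have hTcomp : IsCompact T :=
    isCompact_Icc.of_isClosed_subset hTc (fun z hz => hz.1)
  have hbdd : BddAbove T := ⟨R, fun w hw => hw.1.2⟩
  have hmem : fE R E x ∈ T := by
    rw [show fE R E x = sSup T from rfl]
    exact hTcomp.sSup_mem hTne
  have hfE : mk2 x (fE R E x) ∈ E := hmem.2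
  have hlb : -R + q/2 ≤ fE R E x := le_csSup hbdd hw0
  have hub : fE R E x ≤ R - q := by
    by_contra hcon
    push_neg at hcon
    have h1 : fE R E x ≤ R := hmem.1.2
    have : mk2 x (fE R E x) ∈ ball (mk2 0 R) R := by
      rw [mem_ball_iff2 hR]
      simp only [mk2_zero, mk2_one]
      nlinarith
    have hbad : mk2 x (fE R E x) ∈ ball (mk2 0 R) R ∩ E := ⟨this, hfE⟩
    rw [hhigh] at hbad
    exact hbad
  have hIoo : fE R E x ∈ Ioo (-R) R := ⟨by linarith, by linarith⟩
  refine ⟨?_, hIoo⟩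
  rw [hEc.frontier_eq]
  refine ⟨hfE, fun hint => ?_⟩
  rw [mem_interior_iff_mem_nhds, Metric.mem_nhds_iff] at hint
  obtain ⟨ε, hε, hball⟩ := hint
  set δ := min (ε/2) ((R - fE R E x)/2) with hδdef
  have hδ : 0 < δ := by
    apply lt_min (by linarith)
    linarith [hIoo.2]
  have hmem2 : fE R E x + δ ∈ T := by
    refine ⟨⟨by linarith [hIoo.1], by linarith [min_le_right (ε/2) ((R - fE R E x)/2)]⟩, hball ?_⟩
    rw [mem_ball, dist_mk2_vert]
    rw [show fE R E x + δ - fE R E x = δ by ring, abs_of_pos hδ]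
    calc δ ≤ ε/2 := min_le_left _ _
    _ < ε := by linarith
  have := le_csSup hbdd hmem2
  rw [show sSup T = fE R E x from rfl] at this
  linarith

lemma f_bound (hR : 0 < R) (hEc : IsClosed E)
    (hlow : ball (mk2 0 (-R)) R ⊆ E) (hhigh : ball (mk2 0 R) R ∩ E = ∅)
    {x : ℝ} (hx : x ∈ Ioo (-(Real.sqrt 3 * R / 2)) (Real.sqrt 3 * R / 2)) :
    |fE R E x| ≤ R - Real.sqrt (R^2 - x^2) := by
  obtain ⟨hfr, hIoo⟩ := f_spec hR hEc hlow hhigh hx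
  exact frontier_z_bound hR hEc hlow hhigh hIoo hfr

lemma slice (hR : 0 < R) (hEc : IsClosed E) (hsph : sphereCond 2 R E)
    (hlow : ball (mk2 0 (-R)) R ⊆ E) (hhigh : ball (mk2 0 R) R ∩ E = ∅)
    {x : ℝ} (hx : x ∈ Ioo (-(Real.sqrt 3 * R / 2)) (Real.sqrt 3 * R / 2))
    {z : ℝ} (hz : z ∈ Ioo (-R) R) :
    mk2 x z ∈ E ↔ z ≤ fE R E x := by
  have hbdd : BddAbove {w | w ∈ Icc (-R) R ∧ mk2 x w ∈ E} := ⟨R, fun w hw => hw.1.2⟩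
  constructor
  · intro hE
    exact le_csSup hbdd ⟨⟨hz.1.le, hz.2.le⟩, hE⟩
  · intro hle
    by_contra hnot
    set q := Real.sqrt (R^2 - x^2) with hqdef
    have hx2 : x^2 < 3*R^2/4 := strip_sq hR hx
    have hq2 : q^2 = R^2 - x^2 := q_sq (by nlinarith)
    have hqR2 : R/2 < q := q_pos hR hx2
    have hqle : q ≤ R := q_le hR
    obtain ⟨hfr, hfIoo⟩ := f_spec hR hEc hlow hhigh hx
    rcases lt_or_ge z (-R + q) with hlo | hhi
    · exact hnot (hlow (by
        rw [mem_ball_iff2 hR]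
        simp only [mk2_zero, mk2_one]
        nlinarith [hz.1]))
    · set T₂ := {w | w ∈ Icc (-R) z ∧ mk2 x w ∈ E} with hT₂
      have hw0 : -R + q/2 ∈ T₂ := by
        refine ⟨⟨by linarith, by linarith⟩, hlow ?_⟩
        rw [mem_ball_iff2 hR]
        simp only [mk2_zero, mk2_one]
        nlinarith
      have hT₂ne : T₂.Nonempty := ⟨_, hw0⟩
      have hT₂c : IsClosed T₂ := by
        show IsClosed (Icc (-R) z ∩ (fun w => mk2 x w) ⁻¹' E)
        exact IsClosed.inter isClosed_Icc (hEc.preimage (cont_mk2 x))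
      have hT₂comp : IsCompact T₂ :=
        isCompact_Icc.of_isClosed_subset hT₂c (fun w hw => hw.1)
      have hbdd₂ : BddAbove T₂ := ⟨z, fun w hw => hw.1.2⟩
      set z₂ := sSup T₂ with hz₂def
      have hmem : z₂ ∈ T₂ := hT₂comp.sSup_mem hT₂ne
      have hz₂E : mk2 x z₂ ∈ E := hmem.2
      have hz₂lt : z₂ < z := lt_of_le_of_ne hmem.1.2 (fun h => hnot (h ▸ hz₂E))
      have hz₂lb : -R + q/2 ≤ z₂ := le_csSup hbdd₂ hw0
      have hz₂Ioo : z₂ ∈ Ioo (-R) R := ⟨by linarith, by linarith [hz.2]⟩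
      have hz₂fr : mk2 x z₂ ∈ frontier E := by
        rw [hEc.frontier_eq]
        refine ⟨hz₂E, fun hint => ?_⟩
        rw [mem_interior_iff_mem_nhds, Metric.mem_nhds_iff] at hint
        obtain ⟨ε, hε, hball⟩ := hint
        set δ := min (ε/2) ((z - z₂)/2) with hδdef
        have hδ : 0 < δ := lt_min (by linarith) (by linarith)
        have hmem2 : z₂ + δ ∈ T₂ := by
          refine ⟨⟨by linarith [hz₂Ioo.1], by linarith [min_le_right (ε/2) ((z - z₂)/2)]⟩, hball ?_⟩
          rw [mem_ball, dist_mk2_vert]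
          rw [show z₂ + δ - z₂ = δ by ring, abs_of_pos hδ]
          calc δ ≤ ε/2 := min_le_left _ _
          _ < ε := by linarith
        have := le_csSup hbdd₂ hmem2
        rw [← hz₂def] at this
        linarith
      have := unique_z hR hEc hsph hlow hhigh hx hz₂Ioo hfIoo hz₂fr hfr
      linarith

lemma key_est (hR : 0 < R) (hEc : IsClosed E)
    (hlow : ball (mk2 0 (-R)) R ⊆ E) (hhigh : ball (mk2 0 R) R ∩ E = ∅)
    {x y : ℝ} (hx : x ∈ Ioo (-(Real.sqrt 3 * R / 2)) (Real.sqrt 3 * R / 2))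
    (hy : y ∈ Ioo (-(Real.sqrt 3 * R / 2)) (Real.sqrt 3 * R / 2))
    {α β : ℝ} (hαβ : α^2 + β^2 = R^2)
    (hext : ball (mk2 (x+α) (fE R E x + β)) R ∩ E = ∅)
    (hint : ball (mk2 (x-α) (fE R E x - β)) R ⊆ E) :
    |(y-x)*α + (fE R E y - fE R E x)*β| ≤ ((y-x)^2 + (fE R E y - fE R E x)^2)/2 := by
  obtain ⟨hfr, hIoo⟩ := f_spec hR hEc hlow hhigh hy
  have hPE : mk2 y (fE R E y) ∈ E := hEc.frontier_subset hfr
  have hPnotint : mk2 y (fE R E y) ∉ interior E := by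
    rw [hEc.frontier_eq] at hfr
    exact hfr.2
  have h1 : mk2 y (fE R E y) ∉ ball (mk2 (x+α) (fE R E x + β)) R := fun h => by
    have hbad : mk2 y (fE R E y) ∈ ball (mk2 (x+α) (fE R E x + β)) R ∩ E := ⟨h, hPE⟩
    rw [hext] at hbad
    exact hbad
  have h2 : mk2 y (fE R E y) ∉ ball (mk2 (x-α) (fE R E x - β)) R := fun h =>
    hPnotint (interior_maximal hint isOpen_ball h)
  rw [not_mem_ball_iff2 hR] at h1 h2
  simp only [mk2_zero, mk2_one] at h1 h2
  rw [abs_le]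
  constructor
  · nlinarith [h2, hαβ]
  · nlinarith [h1, hαβ]


set_option maxHeartbeats 1000000 in
/-- Differentiability of the graph function with the expected derivative. -/
lemma hasDeriv (hR : 0 < R) (hEc : IsClosed E)
    (hlow : ball (mk2 0 (-R)) R ⊆ E) (hhigh : ball (mk2 0 R) R ∩ E = ∅)
    {x : ℝ} (hx : x ∈ Ioo (-(Real.sqrt 3 * R / 2)) (Real.sqrt 3 * R / 2))
    {α β : ℝ} (hαβ : α^2 + β^2 = R^2) (hβq : Real.sqrt (R^2 - x^2) ≤ β) (hα2 : α^2 ≤ x^2)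
    (hKE : ∀ y ∈ Ioo (-(Real.sqrt 3 * R / 2)) (Real.sqrt 3 * R / 2),
      |(y-x)*α + (fE R E y - fE R E x)*β| ≤ ((y-x)^2 + (fE R E y - fE R E x)^2)/2) :
    HasDerivAt (fE R E) (-α/β) x := by
  set S := Ioo (-(Real.sqrt 3 * R / 2)) (Real.sqrt 3 * R / 2) with hS
  set q0 := Real.sqrt (R^2 - x^2) with hq0def
  have hx2 : x^2 < 3*R^2/4 := strip_sq hR hx
  have hq0 : R/2 < q0 := q_pos hR hx2
  have hβpos : 0 < β := by linarith
  have hβR2 : R/2 < β := by linarith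
  have hαR : |α| ≤ R := by nlinarith [sq_abs α, abs_nonneg α]
  obtain ⟨δ1, hδ1, hball1⟩ := Metric.isOpen_iff.1 isOpen_Ioo x hx
  set ε0 := 2*q0 - R with hε0def
  have hε0 : 0 < ε0 := by simp only [hε0def]; linarith
  set δ := min δ1 (ε0/2) with hδdef
  have hδ : 0 < δ := lt_min hδ1 (by linarith)
  have hs3 : (Real.sqrt 3)^2 = 3 := Real.sq_sqrt (by norm_num)
  have hs3le2 : Real.sqrt 3 ≤ 2 := by nlinarith [Real.sqrt_nonneg 3]
  -- quadratic bound on increments within ball x δ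
  have hw2 : ∀ y ∈ ball x δ, (fE R E y - fE R E x)^2 ≤ (2*R+δ)^2 * (y-x)^2 / ε0^2 := by
    intro y hyb
    have hyS : y ∈ S := hball1 (mem_of_mem_of_subset hyb (ball_subset_ball (min_le_left _ _)))
    set u := y - x with hu
    set w := fE R E y - fE R E x with hw
    set U := |u| with hU
    set W := |w| with hW
    have hUδ : U < δ := by rw [hU, hu, ← Real.dist_eq]; exact mem_ball.1 hyb
    have hqy : q0 - Real.sqrt 3 * U ≤ Real.sqrt (R^2 - y^2) := by
      have hql := q_lip hR hx hyS
      rw [abs_le] at hql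
      have h1 := hql.1
      rw [← hq0def, ← hu, ← hU] at h1
      linarith
    have hfy : |fE R E y| ≤ R - Real.sqrt (R^2 - y^2) := f_bound hR hEc hlow hhigh hyS
    have hfx : |fE R E x| ≤ R - q0 := by
      rw [hq0def]; exact f_bound hR hEc hlow hhigh hx
    have hWb : W ≤ 2*R - 2*q0 + Real.sqrt 3 * U := by
      have habs : W ≤ |fE R E y| + |fE R E x| := by
        rw [hW, hw]; exact abs_sub _ _
      linarith
    have hke' : |u * α + w * β| ≤ (u^2 + w^2)/2 := by
      rw [hu, hw]; exact hKE y hyS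
    have f1 : β * W ≤ R * U + u^2/2 + w^2/2 := by
      have h1 : |w * β| ≤ |u * α + w * β| + |u * α| := by
        calc |w * β| = |(u * α + w * β) - u * α| := by congr 1; ring
        _ ≤ |u * α + w * β| + |u * α| := abs_sub _ _
      have h2 : |u * α| ≤ R * U := by
        rw [abs_mul, hU]
        calc |u| * |α| ≤ |u| * R := mul_le_mul_of_nonneg_left hαR (abs_nonneg u)
        _ = R * |u| := by ring
      have h3 : |w * β| = W * β := by rw [abs_mul, abs_of_pos hβpos, hW]
      have h4 : W * β = β * W := by ring
      linarith [h1, h2, hke']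
    have f2 : q0 * W ≤ β * W := mul_le_mul_of_nonneg_right hβq (abs_nonneg w)
    have f3 : w^2 ≤ W * (2*R - 2*q0 + Real.sqrt 3 * U) := by
      calc w^2 = W * W := by rw [hW, ← sq_abs w]; ring
      _ ≤ W * (2*R - 2*q0 + Real.sqrt 3 * U) :=
        mul_le_mul_of_nonneg_left hWb (abs_nonneg w)
    have e3' : Real.sqrt 3 * U ≤ 2*q0 - R := by
      have hm : Real.sqrt 3 * U ≤ 2 * U :=
        mul_le_mul_of_nonneg_right hs3le2 (abs_nonneg u)
      have hUε : U ≤ ε0/2 := le_of_lt (lt_of_lt_of_le hUδ (min_le_right _ _))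
      rw [hε0def] at hUε
      linarith
    have f4 : (Real.sqrt 3 * U) * W ≤ (2*q0 - R) * W :=
      mul_le_mul_of_nonneg_right e3' (abs_nonneg w)
    have e4 : W * (2*q0 - R) ≤ 2*R*U + u^2 := by
      clear_value W U w u q0
      linarith [f1, f2, f3, f4]
    have hu2 : u^2 ≤ δ * U := by
      calc u^2 = U * U := by rw [hU, ← sq_abs u]; ring
      _ ≤ δ * U := mul_le_mul_of_nonneg_right hUδ.le (abs_nonneg u)
    have e5 : W * (2*q0 - R) ≤ (2*R + δ) * U := by linarith
    have e6 : (W * (2*q0 - R))^2 ≤ ((2*R + δ) * U)^2 := by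
      have h0 : 0 ≤ W * (2*q0 - R) := mul_nonneg (abs_nonneg w) (by linarith)
      exact pow_le_pow_left₀ h0 e5 2
    rw [le_div_iff₀ (by positivity : (0:ℝ) < ε0^2)]
    have e7 : w^2 * ε0^2 = (W * (2*q0 - R))^2 := by
      rw [hε0def, mul_pow, hW, sq_abs]
    have e8 : ((2*R + δ) * U)^2 = (2*R + δ)^2 * (y-x)^2 := by
      rw [mul_pow, hU, sq_abs, hu]
    rw [e7, ← e8]
    exact e6
  -- conclude HasDerivAt
  rw [hasDerivAt_iff_isLittleO, Asymptotics.isLittleO_iff]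
  intro c hc
  set C := (1 + (2*R+δ)^2/ε0^2) / R with hC
  have hCpos : 0 < C := by positivity
  rw [Metric.eventually_nhds_iff]
  refine ⟨min δ (c/C), lt_min hδ (by positivity), fun {y} hy => ?_⟩
  have hyδ : y ∈ ball x δ := by
    rw [mem_ball]; exact lt_of_lt_of_le hy (min_le_left _ _)
  have hyS : y ∈ S := hball1 (mem_of_mem_of_subset hyδ (ball_subset_ball (min_le_left _ _)))
  have hw2' := hw2 y hyδ
  set u := y - x with hu
  set w := fE R E y - fE R E x with hw
  have hUc : |u| ≤ c/C := by
    rw [hu, ← Real.dist_eq]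
    exact le_of_lt (lt_of_lt_of_le hy (min_le_right _ _))
  have hke : |u * α + w * β| ≤ (u^2 + w^2)/2 := by
    rw [hu, hw]; exact hKE y hyS
  have hstep : |w - u * (-α/β)| ≤ C * u^2 := by
    have heq : w - u * (-α/β) = (u*α + w*β)/β := by field_simp; ring
    rw [heq, abs_div, abs_of_pos hβpos, div_le_iff₀ hβpos]
    have h3 : C * u^2 * (R/2) ≤ C * u^2 * β := by
      have h30 : 0 ≤ C * u^2 := by positivity
      exact mul_le_mul_of_nonneg_left hβR2.le h30
    have h4 : (u^2 + w^2)/2 ≤ C * u^2 * (R/2) := by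
      have hCu : C * u^2 * (R/2) = u^2/2 + (2*R+δ)^2 * u^2 / ε0^2 / 2 := by
        rw [hC]; field_simp
      rw [hCu]
      linarith [hw2']
    clear_value C u w q0 ε0 δ
    linarith [hke, h3, h4]
  rw [Real.norm_eq_abs, Real.norm_eq_abs, smul_eq_mul]
  clear_value C u w q0 ε0 δ
  calc |w - u * (-α/β)| ≤ C * u^2 := hstep
  _ = C * |u| * |u| := by rw [← sq_abs u]; ring
  _ ≤ C * (c/C) * |u| := by
      have hm : C * |u| ≤ C * (c/C) := mul_le_mul_of_nonneg_left hUc hCpos.le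
      exact mul_le_mul_of_nonneg_right hm (abs_nonneg u)
  _ = c * |u| := by field_simp

end Main2
end LG

open LG in
set_option maxHeartbeats 1000000 in
theorem local_graph_2d (R : ℝ) (hR : 0 < R) :
    ∃ L : ℝ≥0, 0 < L ∧ ∀ E ∈ UR 2 R,
      mk2 0 0 ∈ frontier E → ball (mk2 0 (-R)) R ⊆ E → ball (mk2 0 R) R ∩ E = ∅ →
      ∃ f : ℝ → ℝ,
        frontier E ∩ {p | ∃ x ∈ Ioo (-(Real.sqrt 3 * R / 2)) (Real.sqrt 3 * R / 2),
            ∃ z ∈ Ioo (-R) R, p = mk2 x z}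
          = {p | ∃ x ∈ Ioo (-(Real.sqrt 3 * R / 2)) (Real.sqrt 3 * R / 2), p = mk2 x (f x)} ∧
        E ∩ {p | ∃ x ∈ Ioo (-(Real.sqrt 3 * R / 2)) (Real.sqrt 3 * R / 2),
            ∃ z ∈ Ioo (-R) R, p = mk2 x z}
          = {p | ∃ x ∈ Ioo (-(Real.sqrt 3 * R / 2)) (Real.sqrt 3 * R / 2),
              ∃ z ∈ Ioo (-R) R, z ≤ f x ∧ p = mk2 x z} ∧
        f 0 = 0 ∧
        (∀ x ∈ Ioo (-(Real.sqrt 3 * R / 2)) (Real.sqrt 3 * R / 2), DifferentiableAt ℝ f x) ∧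
        (∀ x ∈ Ioo (-(Real.sqrt 3 * R / 2)) (Real.sqrt 3 * R / 2),
          |f x| ≤ R - Real.sqrt (R ^ 2 - x ^ 2)) ∧
        (∀ x ∈ Ioo (-(Real.sqrt 3 * R / 2)) (Real.sqrt 3 * R / 2),
          |deriv f x| ≤ |x| / Real.sqrt (R ^ 2 - x ^ 2)) ∧
        LipschitzOnWith L (deriv f) (Ioo (-(Real.sqrt 3 * R / 2)) (Real.sqrt 3 * R / 2)) := by
  refine ⟨(8/R).toNNReal, Real.toNNReal_pos.2 (by positivity), ?_⟩
  rintro E ⟨hEc, hEb, hsph⟩ h00 hlow hhigh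
  set S := Ioo (-(Real.sqrt 3 * R / 2)) (Real.sqrt 3 * R / 2) with hSdef
  have hspec : ∀ x ∈ S, mk2 x (fE R E x) ∈ frontier E ∧ fE R E x ∈ Ioo (-R) R :=
    fun x hx => f_spec hR hEc hlow hhigh hx
  have hns : ∀ x ∈ S, ∃ α β : ℝ, α^2 + β^2 = R^2 ∧ Real.sqrt (R^2 - x^2) ≤ β ∧ α^2 ≤ x^2 ∧
      ball (mk2 (x+α) (fE R E x + β)) R ∩ E = ∅ ∧ ball (mk2 (x-α) (fE R E x - β)) R ⊆ E :=
    fun x hx => normal_structure hR hEc hsph hlow hhigh hx (hspec x hx).2 (hspec x hx).1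
  choose! α β hαβ hβq hα2 hext hint using hns
  have hKE : ∀ x ∈ S, ∀ y ∈ S,
      |(y-x)*(α x) + (fE R E y - fE R E x)*(β x)|
        ≤ ((y-x)^2 + (fE R E y - fE R E x)^2)/2 :=
    fun x hx y hy => key_est hR hEc hlow hhigh hx hy (hαβ x hx) (hext x hx) (hint x hx)
  have hHD : ∀ x ∈ S, HasDerivAt (fE R E) (-(α x)/(β x)) x := fun x hx =>
    hasDeriv hR hEc hlow hhigh hx (hαβ x hx) (hβq x hx) (hα2 x hx) (fun y hy => hKE x hx y hy)
  have hDA : ∀ x ∈ S, DifferentiableAt ℝ (fE R E) x := fun x hx => (hHD x hx).differentiableAt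
  have hderiv : ∀ x ∈ S, deriv (fE R E) x = -(α x)/(β x) := fun x hx => (hHD x hx).deriv
  have hq : ∀ x ∈ S, R/2 < Real.sqrt (R^2 - x^2) := fun x hx => q_pos hR (strip_sq hR hx)
  have hβpos : ∀ x ∈ S, R/2 < β x := fun x hx => lt_of_lt_of_le (hq x hx) (hβq x hx)
  have hαle : ∀ x ∈ S, |α x| ≤ |x| := by
    intro x hx
    have h := hα2 x hx
    nlinarith [sq_abs (α x), sq_abs x, abs_nonneg (α x), abs_nonneg x]
  have hdb : ∀ x ∈ S, |deriv (fE R E) x| ≤ |x| / Real.sqrt (R^2 - x^2) := by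
    intro x hx
    rw [hderiv x hx, abs_div, abs_neg, abs_of_pos (by linarith [hβpos x hx, hq x hx] : (0:ℝ) < β x)]
    exact div_le_div₀ (abs_nonneg x) (hαle x hx) (by linarith [hq x hx]) (hβq x hx)
  have hs3 : (Real.sqrt 3)^2 = 3 := Real.sq_sqrt (by norm_num)
  have hs30 : (0:ℝ) ≤ Real.sqrt 3 := Real.sqrt_nonneg 3
  have hdb3 : ∀ x ∈ S, |deriv (fE R E) x| ≤ Real.sqrt 3 := by
    intro x hx
    refine le_trans (hdb x hx) ?_
    have h1 : |x| ≤ Real.sqrt 3 * R / 2 := by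
      rw [abs_le]; exact ⟨hx.1.le, hx.2.le⟩
    have h2 := hq x hx
    calc |x| / Real.sqrt (R^2 - x^2) ≤ (Real.sqrt 3 * R / 2) / (R/2) :=
      div_le_div₀ (by positivity) h1 (by linarith) h2.le
    _ = Real.sqrt 3 := by field_simp
  have hlipf : ∀ x ∈ S, ∀ y ∈ S, |fE R E y - fE R E x| ≤ Real.sqrt 3 * |y - x| := by
    intro x hx y hy
    have h := (convex_Ioo _ _).norm_image_sub_le_of_norm_deriv_le (f := fE R E) hDA
      (fun z hz => by rw [Real.norm_eq_abs]; exact hdb3 z hz) hx hy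
    rw [Real.norm_eq_abs, Real.norm_eq_abs] at h
    exact h
  have hglob : ∀ x ∈ S, ∀ y ∈ S,
      |fE R E y - fE R E x - deriv (fE R E) x * (y - x)| * R ≤ 4 * (y-x)^2 := by
    intro x hx y hy
    set u := y - x with hu
    set w := fE R E y - fE R E x with hw
    have hke : |u * (α x) + w * (β x)| ≤ (u^2 + w^2)/2 := by
      rw [hu, hw]; exact hKE x hx y hy
    have hβx : 0 < β x := by linarith [hβpos x hx]
    have hw3 : w^2 ≤ 3 * u^2 := by
      have h := hlipf x hx y hy
      rw [← hw, ← hu] at h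
      nlinarith [sq_abs w, sq_abs u, hs3, mul_self_le_mul_self (abs_nonneg w) h]
    rw [hderiv x hx]
    have heq2 : w - (-(α x)/(β x)) * u = (u * (α x) + w * (β x))/(β x) := by
      field_simp; ring
    have hN : |w - (-(α x)/(β x)) * u| = |u * (α x) + w * (β x)| / (β x) := by
      rw [heq2, abs_div, abs_of_pos hβx]
    have h7 : |u * (α x) + w * (β x)| ≤ 2*u^2 := by
      clear_value u w
      linarith
    have h8 : |w - (-(α x)/(β x)) * u| * (β x) = |u * (α x) + w * (β x)| := by
      rw [hN]; field_simp
    have h9 : |w - (-(α x)/(β x)) * u| * R ≤ |w - (-(α x)/(β x)) * u| * (2 * β x) :=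
      mul_le_mul_of_nonneg_left (by linarith [hβpos x hx]) (abs_nonneg _)
    have h10 : |w - (-(α x)/(β x)) * u| * (2 * β x)
        = 2 * (|w - (-(α x)/(β x)) * u| * (β x)) := by ring
    clear_value u w
    calc |w - (-(α x)/(β x)) * u| * R ≤ 2 * (|u * (α x) + w * (β x)|) := by
          rw [h10, h8] at h9; linarith
    _ ≤ 4 * u^2 := by linarith
  have hlipd : LipschitzOnWith (8/R).toNNReal (deriv (fE R E)) S := by
    apply LipschitzOnWith.of_dist_le_mul
    intro x hx y hy
    rw [Real.dist_eq, Real.dist_eq, Real.coe_toNNReal _ (by positivity : (0:ℝ) ≤ 8/R)]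
    rcases eq_or_ne x y with rfl | hne
    · simp
    · have h1 := hglob x hx y hy
      have h2 := hglob y hy x hx
      set A := fE R E y - fE R E x - deriv (fE R E) y * (y - x) with hA
      set B := fE R E y - fE R E x - deriv (fE R E) x * (y - x) with hB
      have h2' : |A| * R ≤ 4 * (x-y)^2 := by
        have heqA : A = -(fE R E x - fE R E y - deriv (fE R E) y * (x - y)) := by
          rw [hA]; ring
        rw [heqA, abs_neg]
        calc |fE R E x - fE R E y - deriv (fE R E) y * (x - y)| * R ≤ 4 * (x-y)^2 := h2
        _ = 4 * (x-y)^2 := rfl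
      have h1' : |B| * R ≤ 4 * (x-y)^2 := by
        calc |B| * R ≤ 4 * (y-x)^2 := h1
        _ = 4 * (x-y)^2 := by ring
      have e1 : (deriv (fE R E) x - deriv (fE R E) y) * (y - x) = A - B := by
        rw [hA, hB]; ring
      have habs : |(deriv (fE R E) x - deriv (fE R E) y) * (y - x)| ≤ |A| + |B| := by
        rw [e1]; exact abs_sub _ _
      have habsR : |(deriv (fE R E) x - deriv (fE R E) y) * (y - x)| * R ≤ 8 * (x-y)^2 := by
        have := mul_le_mul_of_nonneg_right habs hR.le
        clear_value A B
        nlinarith [h1', h2']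
      have hxy : 0 < |x - y| := abs_pos.2 (sub_ne_zero.2 hne)
      have hmul : |deriv (fE R E) x - deriv (fE R E) y| * |x - y|
          = |(deriv (fE R E) x - deriv (fE R E) y) * (y - x)| := by
        rw [abs_mul, abs_sub_comm x y]
      have hsq : 8 * (x-y)^2 = (8 * |x-y|) * |x-y| := by
        rw [← sq_abs]; ring
      have hfin : (|deriv (fE R E) x - deriv (fE R E) y| * R) * |x-y|
          ≤ (8 * |x-y|) * |x-y| := by
        rw [← hsq]
        calc (|deriv (fE R E) x - deriv (fE R E) y| * R) * |x-y|
            = (|deriv (fE R E) x - deriv (fE R E) y| * |x-y|) * R := by ring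
        _ = |(deriv (fE R E) x - deriv (fE R E) y) * (y - x)| * R := by rw [hmul]
        _ ≤ 8 * (x-y)^2 := habsR
      have hdiv : |deriv (fE R E) x - deriv (fE R E) y| * R ≤ 8 * |x-y| :=
        le_of_mul_le_mul_right hfin hxy
      rw [show (8/R) * |x-y| = 8 * |x-y| / R by ring, le_div_iff₀ hR]
      exact hdiv
  have h0S : (0:ℝ) ∈ S := by
    have hpos : (0:ℝ) < Real.sqrt 3 * R / 2 := by positivity
    exact ⟨by linarith, hpos⟩
  have hf0 : fE R E 0 = 0 := by
    refine unique_z hR hEc hsph hlow hhigh h0S (hspec 0 h0S).2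
      ⟨by linarith, hR⟩ (hspec 0 h0S).1 h00
  refine ⟨fE R E, ?_, ?_, hf0, hDA, ?_, ?_, hlipd⟩
  · ext p
    constructor
    · rintro ⟨hpf, x, hx, z, hz, rfl⟩
      have hz' : z = fE R E x :=
        unique_z hR hEc hsph hlow hhigh hx hz (hspec x hx).2 hpf (hspec x hx).1
      exact ⟨x, hx, by rw [hz']⟩
    · rintro ⟨x, hx, rfl⟩
      exact ⟨(hspec x hx).1, x, hx, fE R E x, (hspec x hx).2, rfl⟩
  · ext p
    constructor
    · rintro ⟨hpE, x, hx, z, hz, rfl⟩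
      exact ⟨x, hx, z, hz, (slice hR hEc hsph hlow hhigh hx hz).1 hpE, rfl⟩
    · rintro ⟨x, hx, z, hz, hle, rfl⟩
      exact ⟨(slice hR hEc hsph hlow hhigh hx hz).2 hle, x, hx, z, hz, rfl⟩
  · intro x hx
    exact f_bound hR hEc hlow hhigh hx
  · exact hdb
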